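/- The matrix D = (1/4)[[2,0,1,1],[0,2,1,1],[1,1,2,0],[1,1,0,2]] has a qubit implementation: there exist density matrices ρ_1,…,ρ_4 on ℂ² and a 4-outcome POVM M on ℂ² with D_{ij} = tr(ρ_i M(j)). -/

import Mathlib

open Matrix BigOperators
open scoped ComplexOrder

/-- A quantum (dimension-d) implementation of a communication matrix `C`:
states `ρ` are density matrices, `M` is a POVM, and `C a b = tr(ρ_a M(b))`. -/
def QImpl {d n m : ℕ} (C : Matrix (Fin n) (Fin m) ℝ)
    (ρ : Fin n → Matrix (Fin d) (Fin d) ℂ) (M : Fin m → Matrix (Fin d) (Fin d) ℂ) : Prop :=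
  (∀ a, (ρ a).PosSemidef) ∧ (∀ a, (ρ a).trace = 1) ∧
  (∀ b, (M b).PosSemidef) ∧ (∑ b, M b) = 1 ∧
  ∀ a b, (C a b : ℂ) = (ρ a * M b).trace

private lemma psd_outer {n : ℕ} (w : Fin n → ℂ) : (vecMulVec w (star w)).PosSemidef := by
  have h : vecMulVec w (star w) = (replicateRow Unit (star w))ᴴ * replicateRow Unit (star w) := by
    rw [conjTranspose_replicateRow, star_star, ← vecMulVec_eq Unit]
  rw [h]
  exact posSemidef_conjTranspose_mul_self _

private lemma psd_smul {n : ℕ} {A : Matrix (Fin n) (Fin n) ℂ} (h : A.PosSemidef)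
    (c : ℝ) (hc : 0 ≤ c) : ((c : ℂ) • A).PosSemidef := by
  refine ⟨?_, fun x => ?_⟩
  · unfold Matrix.IsHermitian
    rw [conjTranspose_smul, h.1.eq]
    congr 1
    simp
  · exact (h.smul (a := (c : ℂ)) (by exact_mod_cast Complex.zero_le_real.mpr hc)).2 x

/-- The matrix D = (1/4)[[2,0,1,1],[0,2,1,1],[1,1,2,0],[1,1,0,2]] has a qubit
implementation. -/
theorem qubit_implementation_exists :
    ∃ (ρ : Fin 4 → Matrix (Fin 2) (Fin 2) ℂ) (M : Fin 4 → Matrix (Fin 2) (Fin 2) ℂ),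
      QImpl ((1/4 : ℝ) • !![2, 0, 1, 1; 0, 2, 1, 1; 1, 1, 2, 0; 1, 1, 0, 2]) ρ M := by
  set v : Fin 4 → Fin 2 → ℂ := ![![1,1], ![1,-1], ![1, Complex.I], ![1, -Complex.I]] with hv
  refine ⟨fun a => ((1/2 : ℝ) : ℂ) • vecMulVec (v a) (star (v a)),
          fun b => ((1/4 : ℝ) : ℂ) • vecMulVec (v b) (star (v b)), ?_, ?_, ?_, ?_, ?_⟩
  · exact fun a => psd_smul (psd_outer _) _ (by norm_num)
  · intro a
    fin_cases a <;>
      simp [hv, Matrix.trace_fin_two, vecMulVec_apply, Complex.ext_iff, Pi.star_apply, Matrix.vecHead, Matrix.vecTail, -cons_vecMulVec, -vecMulVec_cons] <;> norm_num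
  · exact fun b => psd_smul (psd_outer _) _ (by norm_num)
  · ext i j
    fin_cases i <;> fin_cases j <;>
      simp [hv, Fin.sum_univ_four, vecMulVec_apply, Matrix.one_apply, Complex.ext_iff, -cons_vecMulVec, -vecMulVec_cons] <;>
      norm_num [Complex.I_mul_I]
  · intro a b
    fin_cases a <;> fin_cases b <;>
      simp [hv, Matrix.trace_fin_two, Matrix.mul_apply, Fin.sum_univ_two, vecMulVec_apply,
        Matrix.smul_apply, Complex.ext_iff, Matrix.vecHead, Matrix.vecTail, -cons_vecMulVec, -vecMulVec_cons] <;> norm_num
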